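/- The minimum cost of weighted token swapping on a star equals D_w + 2w(x) + 2·min{w(a)(ℓ−1), w(h)(ℓ+1)} when ℓ ≥ 1 (and equals D_w when ℓ = 0), where x is a minimum-weight token in the unlocked cycle, a is a minimum-weight active token, h is a minimum-weight token on a happy leaf, ℓ is the number of nontrivial locked cycles, and D_w = Σ_t w(t)d(t) (if no happy leaf exists, the w(h) term is omitted). -/

import Mathlib

set_option linter.unusedSectionVars false
set_option linter.unusedVariables false

/-- Distance between two vertices of the star with center `0` on `Fin (n+1)`. -/
def starDist (n : ℕ) (u v : Fin (n + 1)) : ℕ :=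
  if u = v then 0 else if u = 0 ∨ v = 0 then 1 else 2

/-- Star token swapping: a swap exchanges the center token with a leaf token. -/
def applyStarSwaps (n : ℕ) (π : Equiv.Perm (Fin (n + 1))) (s : List (Fin (n + 1))) :
    Equiv.Perm (Fin (n + 1)) :=
  s.foldl (fun σ v => σ * Equiv.swap 0 v) π

/-- Cost of a sequence of star swaps: swapping tokens `t, t'` costs `w t + w t'`. -/
def starCost {n : ℕ} (w : Fin (n + 1) → ℝ) :
    List (Fin (n + 1)) → Equiv.Perm (Fin (n + 1)) → ℝ
  | [], _ => 0
  | v :: s, π => (w (π 0) + w (π v)) + starCost w s (π * Equiv.swap 0 v)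

/-- Weighted total distance `D_w = Σ_t w(t) d(t)`; token `t` sits on vertex `π⁻¹ t`. -/
def Dw (n : ℕ) (w : Fin (n + 1) → ℝ) (π : Equiv.Perm (Fin (n + 1))) : ℝ :=
  ∑ t : Fin (n + 1), w t * (starDist n (π⁻¹ t) t : ℝ)

/-- `H`: the tokens on happy leaves. -/
def Hset (n : ℕ) (π : Equiv.Perm (Fin (n + 1))) : Finset (Fin (n + 1)) :=
  Finset.univ.filter fun t => π t = t ∧ t ≠ 0

/-- `A`: the active tokens (all tokens not on happy leaves). -/
def Aset (n : ℕ) (π : Equiv.Perm (Fin (n + 1))) : Finset (Fin (n + 1)) :=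
  Finset.univ \ Hset n π

/-- `X`: the tokens of the unlocked cycle (the cycle containing the center `0`). -/
def Xset (n : ℕ) (π : Equiv.Perm (Fin (n + 1))) : Finset (Fin (n + 1)) :=
  insert 0 (π.cycleOf 0).support

/-- `ℓ`: the number of nontrivial locked cycles (cycles of length ≥ 2 avoiding `0`). -/
def lockC (n : ℕ) (π : Equiv.Perm (Fin (n + 1))) : ℕ :=
  (π.cycleFactorsFinset.filter fun c => c 0 = 0).card

open Equiv Equiv.Perm Finset


section CoreCycle
variable {α : Type*} [Fintype α] [DecidableEq α]

private lemma pow_succ_apply (f : Perm α) (k : ℕ) (z : α) :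
    (f ^ (k + 1)) z = f ((f ^ k) z) := by
  rw [pow_succ', Equiv.Perm.mul_apply]

lemma sameCycle_of_invariant {f : Perm α} {W : Set α} (hW : ∀ y ∈ W, f y ∈ W) {x y : α}
    (hx : x ∈ W) (h : f.SameCycle x y) : y ∈ W := by
  obtain ⟨i, -, rfl⟩ := h.exists_pow_eq'
  clear h
  induction i with
  | zero => simpa
  | succ k ih => rw [pow_succ_apply]; exact hW _ ih

lemma sameCycle_mul_swap_self {f : Perm α} {x v : α} (h : ¬ f.SameCycle x v) :
    (f * Equiv.swap x v).SameCycle x v := by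
  set g := f * Equiv.swap x v with hg
  have hgx : g x = f v := by simp [hg]
  have key : ∀ k, 1 ≤ k → (g.SameCycle x ((f ^ k) v) ∨ g.SameCycle x v) := by
    intro k hk
    induction k, hk using Nat.le_induction with
    | base =>
      left; rw [pow_one, ← hgx]; exact sameCycle_apply_right.mpr (SameCycle.refl g x)
    | succ k hk ih =>
      rcases ih with ih | ih
      · by_cases hv : (f ^ k) v = v
        · left
          rw [pow_succ_apply, hv, ← hgx]
          exact sameCycle_apply_right.mpr (SameCycle.refl g x)
        · by_cases hx2 : (f ^ k) v = x
          · exact absurd (SameCycle.symm ⟨(k : ℤ), by simpa using hx2⟩) h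
          · left
            have hh : (f ^ (k+1)) v = g ((f ^ k) v) := by
              rw [pow_succ_apply, hg, Equiv.Perm.mul_apply,
                Equiv.swap_apply_of_ne_of_ne hx2 hv]
            rw [hh]
            exact sameCycle_apply_right.mpr ih
      · right; exact ih
  rcases key (orderOf f) (orderOf_pos f) with h1 | h1
  · rwa [pow_orderOf_eq_one, Equiv.Perm.one_apply] at h1
  · exact h1

lemma sameCycle_mul_swap_iff {f : Perm α} {x v : α} (h : ¬ f.SameCycle x v) (y : α) :
    (f * Equiv.swap x v).SameCycle x y ↔ f.SameCycle x y ∨ f.SameCycle v y := by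
  set g := f * Equiv.swap x v with hg
  have hgx : g x = f v := by simp [hg]
  have hgv : g v = f x := by simp [hg]
  have hxv : x ≠ v := fun e => h (e ▸ SameCycle.refl f x)
  constructor
  · intro hy
    refine sameCycle_of_invariant (W := {y | f.SameCycle x y ∨ f.SameCycle v y})
      ?_ (Or.inl (SameCycle.refl f x)) hy
    intro z hz
    have : g z = f (Equiv.swap x v z) := by rw [hg, Equiv.Perm.mul_apply]
    rcases eq_or_ne z x with rfl | hzx
    · rw [this, Equiv.swap_apply_left]; exact Or.inr (sameCycle_apply_right.mpr (.refl f v))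
    rcases eq_or_ne z v with rfl | hzv
    · rw [this, Equiv.swap_apply_right]; exact Or.inl (sameCycle_apply_right.mpr (.refl f x))
    · rw [this, Equiv.swap_apply_of_ne_of_ne hzx hzv]
      rcases hz with hz | hz
      · exact Or.inl (sameCycle_apply_right.mpr hz)
      · exact Or.inr (sameCycle_apply_right.mpr hz)
  · have hWclosed : ∀ z ∈ {y | g.SameCycle x y}, f z ∈ {y | g.SameCycle x y} := by
      intro z hz
      rcases eq_or_ne z x with rfl | hzx
      · rw [← hgv]
        exact (sameCycle_mul_swap_self h).trans (sameCycle_apply_right.mpr (.refl g v))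
      rcases eq_or_ne z v with rfl | hzv
      · rw [← hgx]; exact sameCycle_apply_right.mpr (.refl g x)
      · have : f z = g z := by
          rw [hg, Equiv.Perm.mul_apply, Equiv.swap_apply_of_ne_of_ne hzx hzv]
        rw [this]; exact sameCycle_apply_right.mpr hz
    rintro (hy | hy)
    · exact sameCycle_of_invariant hWclosed (SameCycle.refl g x) hy
    · exact sameCycle_of_invariant hWclosed (sameCycle_mul_swap_self h) hy

lemma not_sameCycle_mul_swap {f : Perm α} {x v : α} (hxv : x ≠ v) (h : f.SameCycle x v) :
    ¬ (f * Equiv.swap x v).SameCycle x v := by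
  set g := f * Equiv.swap x v with hg
  have hgx : g x = f v := by simp [hg]
  have hex : ∃ k, 0 < k ∧ (f ^ k) v = x := by
    obtain ⟨i, hi0, -, hie⟩ := (h.symm).exists_pow_eq''
    exact ⟨i, hi0, hie⟩
  classical
  set m := Nat.find hex with hm
  obtain ⟨hm0, hmx⟩ : 0 < m ∧ (f ^ m) v = x := Nat.find_spec hex
  have hmin : ∀ k, 0 < k → k < m → (f ^ k) v ≠ x := by
    intro k hk0 hkm hke
    exact Nat.find_min hex hkm ⟨hk0, hke⟩
  set W : Set α := {y | y = x ∨ ∃ k, 0 < k ∧ k < m ∧ (f ^ k) v = y} with hW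
  have hvW : v ∉ W := by
    rintro (rfl | ⟨k, hk0, hkm, hke⟩)
    · exact hxv rfl
    · -- (f^k) v = v with 0<k<m, then (f^(m-k)) v = x with m-k < m
      have : (f ^ (m - k)) v = x := by
        have : (f ^ (m - k)) ((f ^ k) v) = x := by
          rw [← Equiv.Perm.mul_apply, ← pow_add]
          rwa [Nat.sub_add_cancel hkm.le]
        rwa [hke] at this
      exact hmin (m - k) (Nat.sub_pos_of_lt hkm) (by omega) this
  have hclosed : ∀ z ∈ W, g z ∈ W := by
    intro z hz
    rcases hz with rfl | ⟨k, hk0, hkm, hke⟩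
    · rw [hgx]
      rcases eq_or_ne m 1 with hm1 | hm1
      · left; rw [← pow_one f]; rw [hm1] at hmx; exact hmx
      · right; exact ⟨1, one_pos, by omega, by rw [pow_one]⟩
    · have hzx : z ≠ x := hke ▸ hmin k hk0 hkm
      have hzv : z ≠ v := fun e => hvW (e ▸ (show z ∈ W from Or.inr ⟨k, hk0, hkm, hke⟩))
      have hgz : g z = f z := by
        rw [hg, Equiv.Perm.mul_apply, Equiv.swap_apply_of_ne_of_ne hzx hzv]
      rw [hgz, ← hke, ← pow_succ_apply]
      rcases eq_or_ne (k + 1) m with he | hne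
      · left; rw [he]; exact hmx
      · right; exact ⟨k + 1, Nat.succ_pos k, by omega, rfl⟩
  intro hcon
  exact hvW (sameCycle_of_invariant hclosed (Or.inl rfl) hcon)

/-- Split characterization. -/
lemma sameCycle_split {f : Perm α} {x v : α} (hxv : x ≠ v) (h : f.SameCycle x v) (y : α) :
    f.SameCycle x y ↔
      (f * Equiv.swap x v).SameCycle x y ∨ (f * Equiv.swap x v).SameCycle v y := by
  have h2 := sameCycle_mul_swap_iff (not_sameCycle_mul_swap hxv h) y
  rwa [mul_assoc, Equiv.swap_mul_self, mul_one] at h2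

end CoreCycle


section Sets
variable {n : ℕ} {π : Equiv.Perm (Fin (n + 1))}

lemma eq_of_sameCycle_fixed {f : Perm (Fin (n+1))} {a b : Fin (n+1)} (hf : f a = a)
    (h : f.SameCycle a b) : b = a := by
  obtain ⟨i, hi⟩ := h
  rw [zpow_apply_eq_self_of_apply_eq_self hf] at hi
  exact hi.symm

lemma mem_Xset {t : Fin (n+1)} : t ∈ Xset n π ↔ π.SameCycle 0 t := by
  unfold Xset
  rw [Finset.mem_insert, Equiv.Perm.mem_support_cycleOf_iff]
  constructor
  · rintro (rfl | ⟨h, -⟩)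
    · exact SameCycle.refl π 0
    · exact h
  · intro h
    by_cases h0 : π 0 = 0
    · exact Or.inl (eq_of_sameCycle_fixed h0 h)
    · exact Or.inr ⟨h, Equiv.Perm.mem_support.mpr h0⟩

lemma mem_Hset {t : Fin (n+1)} : t ∈ Hset n π ↔ π t = t ∧ t ≠ 0 := by
  simp [Hset]

lemma mem_Aset {t : Fin (n+1)} : t ∈ Aset n π ↔ π t ≠ t ∨ t = 0 := by
  simp [Aset, Hset]; tauto

lemma zero_mem_Xset : (0 : Fin (n+1)) ∈ Xset n π := mem_Xset.mpr (SameCycle.refl π 0)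
lemma zero_mem_Aset : (0 : Fin (n+1)) ∈ Aset n π := mem_Aset.mpr (Or.inr rfl)
lemma Xset_nonempty : (Xset n π).Nonempty := ⟨0, zero_mem_Xset⟩
lemma Aset_nonempty : (Aset n π).Nonempty := ⟨0, zero_mem_Aset⟩

lemma Xset_subset_Aset : Xset n π ⊆ Aset n π := by
  intro t ht
  rw [mem_Xset] at ht
  rw [mem_Aset]
  by_cases h : π t = t
  · exact Or.inr (eq_of_sameCycle_fixed h ht.symm).symm
  · exact Or.inl h

lemma pi_zero_mem_Xset : π 0 ∈ Xset n π :=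
  mem_Xset.mpr (sameCycle_apply_right.mpr (SameCycle.refl π 0))

/-- number of locked cycles avoiding `v`, plus indicator. -/
lemma lockC_count {v : Fin (n+1)} (hv : v ≠ 0) :
    lockC n π = ((π.cycleFactorsFinset.filter fun c => c 0 = 0 ∧ c v = v).card)
      + (if π v ≠ v ∧ ¬ π.SameCycle 0 v then 1 else 0) := by
  classical
  unfold lockC
  have hsplit : (π.cycleFactorsFinset.filter fun c => c 0 = 0)
      = (π.cycleFactorsFinset.filter fun c => c 0 = 0 ∧ c v = v)
        ∪ (π.cycleFactorsFinset.filter fun c => c 0 = 0 ∧ c v ≠ v) := by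
    ext c; simp only [Finset.mem_filter, Finset.mem_union]; tauto
  have hdisj : Disjoint (π.cycleFactorsFinset.filter fun c => c 0 = 0 ∧ c v = v)
      (π.cycleFactorsFinset.filter fun c => c 0 = 0 ∧ c v ≠ v) := by
    rw [Finset.disjoint_left]
    intro c hc1 hc2
    simp only [Finset.mem_filter] at hc1 hc2
    exact hc2.2.2 hc1.2.2
  rw [hsplit, Finset.card_union_of_disjoint hdisj]
  congr 1
  by_cases hcond : π v ≠ v ∧ ¬ π.SameCycle 0 v
  · rw [if_pos hcond]
    have : (π.cycleFactorsFinset.filter fun c => c 0 = 0 ∧ c v ≠ v) = {π.cycleOf v} := by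
      ext c
      simp only [Finset.mem_filter, Finset.mem_singleton]
      constructor
      · rintro ⟨hc, -, hcv⟩
        exact Equiv.Perm.cycle_is_cycleOf (Equiv.Perm.mem_support.mpr hcv) hc
      · rintro rfl
        refine ⟨Equiv.Perm.cycleOf_mem_cycleFactorsFinset_iff.mpr
          (Equiv.Perm.mem_support.mpr hcond.1), ?_, ?_⟩
        · rw [Equiv.Perm.cycleOf_apply, if_neg]
          intro hsc; exact hcond.2 (hsc.symm)
        · rw [Equiv.Perm.cycleOf_apply_self]
          exact hcond.1
    rw [this, Finset.card_singleton]
  · rw [if_neg hcond]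
    have : (π.cycleFactorsFinset.filter fun c => c 0 = 0 ∧ c v ≠ v) = ∅ := by
      ext c
      simp only [Finset.mem_filter, Finset.notMem_empty, iff_false, not_and, and_imp]
      intro hc hc0 hcv
      have hc' := Equiv.Perm.cycle_is_cycleOf (Equiv.Perm.mem_support.mpr hcv) hc
      have hπv : π v ≠ v := by
        have := Equiv.Perm.mem_support_cycleOf_iff.mp
          (hc' ▸ Equiv.Perm.mem_support.mpr hcv)
        exact Equiv.Perm.mem_support.mp this.2
      have hsc : π.SameCycle 0 v := by
        by_contra hsc
        exact hcond ⟨hπv, hsc⟩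
      have : (0 : Fin (n+1)) ∈ c.support := by
        rw [hc', Equiv.Perm.mem_support_cycleOf_iff]
        exact ⟨hsc.symm, Equiv.Perm.mem_support.mpr hπv⟩
      rw [Equiv.Perm.mem_support] at this
      exact this hc0
    rw [this, Finset.card_empty]

lemma locked_filter_eq {v : Fin (n+1)} (hv : v ≠ 0) :
    (π.cycleFactorsFinset.filter fun c => c 0 = 0 ∧ c v = v)
      = ((π * Equiv.swap 0 v).cycleFactorsFinset.filter fun c => c 0 = 0 ∧ c v = v) := by
  ext c
  simp only [Finset.mem_filter, Equiv.Perm.mem_cycleFactorsFinset_iff]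
  constructor
  · rintro ⟨⟨hcyc, hagree⟩, h0, hvv⟩
    refine ⟨⟨hcyc, ?_⟩, h0, hvv⟩
    intro a ha
    have ha0 : a ≠ 0 := by rintro rfl; rw [Equiv.Perm.mem_support] at ha; exact ha h0
    have hav : a ≠ v := by rintro rfl; rw [Equiv.Perm.mem_support] at ha; exact ha hvv
    rw [Equiv.Perm.mul_apply, Equiv.swap_apply_of_ne_of_ne ha0 hav]
    exact hagree a ha
  · rintro ⟨⟨hcyc, hagree⟩, h0, hvv⟩
    refine ⟨⟨hcyc, ?_⟩, h0, hvv⟩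
    intro a ha
    have ha0 : a ≠ 0 := by rintro rfl; rw [Equiv.Perm.mem_support] at ha; exact ha h0
    have hav : a ≠ v := by rintro rfl; rw [Equiv.Perm.mem_support] at ha; exact ha hvv
    have := hagree a ha
    rwa [Equiv.Perm.mul_apply, Equiv.swap_apply_of_ne_of_ne ha0 hav] at this

lemma sameCycle_toggle {v : Fin (n+1)} (hv : v ≠ 0) :
    (π * Equiv.swap 0 v).SameCycle 0 v ↔ ¬ π.SameCycle 0 v := by
  constructor
  · intro h1 h2
    exact not_sameCycle_mul_swap (Ne.symm hv) h2 h1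
  · exact sameCycle_mul_swap_self

lemma lockC_mul_swap {v : Fin (n+1)} (hv : v ≠ 0) :
    lockC n (π * Equiv.swap 0 v)
      + (if π v ≠ v ∧ ¬ π.SameCycle 0 v then 1 else 0)
    = lockC n π + (if π 0 ≠ v ∧ π.SameCycle 0 v then 1 else 0) := by
  rw [lockC_count (π := π) hv, lockC_count (π := π * Equiv.swap 0 v) hv,
    ← locked_filter_eq (π := π) hv]
  have h1 : (π * Equiv.swap 0 v) v = π 0 := by simp
  have h2 : ((π * Equiv.swap 0 v) v ≠ v ∧ ¬ (π * Equiv.swap 0 v).SameCycle 0 v)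
      ↔ (π 0 ≠ v ∧ π.SameCycle 0 v) := by
    rw [h1, sameCycle_toggle hv, not_not]
  rw [if_congr h2 rfl rfl]
  ring

end Sets


section Swaps
variable {n : ℕ} {π : Equiv.Perm (Fin (n + 1))} {v : Fin (n + 1)}

lemma Hset_mul_swap (hv : v ≠ 0) :
    Hset n (π * Equiv.swap 0 v)
      = if π 0 = v then insert v (Hset n π) else (Hset n π).erase v := by
  ext y
  simp only [Hset, Finset.mem_filter, Finset.mem_univ, true_and]
  simp only [Equiv.Perm.mul_apply]
  rcases eq_or_ne y v with rfl | hyv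
  · rw [Equiv.swap_apply_right]
    split_ifs with h
    · simp [h, hv]
    · simp [h, hv]
  · rcases eq_or_ne y 0 with rfl | hy0
    · rw [Equiv.swap_apply_left]
      split_ifs with h
      · simp [Ne.symm hv]
      · simp
    · rw [Equiv.swap_apply_of_ne_of_ne hy0 hyv]
      split_ifs with h
      · simp [hyv]
      · simp [hyv]

lemma Aset_mul_swap (hv : v ≠ 0) :
    Aset n (π * Equiv.swap 0 v)
      = if π 0 = v then (Aset n π).erase v else insert v (Aset n π) := by
  unfold Aset
  rw [Hset_mul_swap hv]
  split_ifs with h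
  · ext y
    simp only [Finset.mem_sdiff, Finset.mem_univ, true_and, Finset.mem_insert,
      Finset.mem_erase]
    tauto
  · ext y
    simp only [Finset.mem_sdiff, Finset.mem_univ, true_and, Finset.mem_insert,
      Finset.mem_erase]
    rcases eq_or_ne y v with rfl | hyv
    · simp [Hset, hv]
    · tauto

/-- Dw change under a swap. -/
lemma Dw_mul_swap (w : Fin (n+1) → ℝ) (hv : v ≠ 0) :
    Dw n w (π * Equiv.swap 0 v)
      = Dw n w π - (w (π 0) + w (π v)) + 2 * (if π 0 = v then 0 else w (π 0))
          + 2 * (if π v = v then w (π v) else 0) := by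
  have hut : π 0 ≠ π v := fun h => hv (π.injective h).symm
  have hinv : ∀ y, (π * Equiv.swap 0 v)⁻¹ y = Equiv.swap 0 v (π⁻¹ y) := by
    intro y; simp [mul_inv_rev, Equiv.Perm.mul_apply]
  have key : ∀ y : Fin (n+1), y ≠ π 0 → y ≠ π v →
      w y * (starDist n ((π * Equiv.swap 0 v)⁻¹ y) y : ℝ)
        = w y * (starDist n (π⁻¹ y) y : ℝ) := by
    intro y h1 h2
    rw [hinv, Equiv.swap_apply_of_ne_of_ne]
    · intro h; apply h1; rw [← h]; simp
    · intro h; apply h2; rw [← h]; simp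
  have hsplit : ∀ (f : Fin (n+1) → ℝ),
      (∀ y, y ≠ π 0 → y ≠ π v → f y = 0) →
      ∑ y, f y = f (π 0) + f (π v) := by
    intro f hf
    rw [← Finset.sum_pair hut]
    apply (Finset.sum_subset (Finset.subset_univ _) _).symm
    intro y _ hy
    simp only [Finset.mem_insert, Finset.mem_singleton] at hy
    push_neg at hy
    exact hf y hy.1 hy.2
  have heq : ∑ y, w y * (starDist n ((π * Equiv.swap 0 v)⁻¹ y) y : ℝ)
      - ∑ y, w y * (starDist n (π⁻¹ y) y : ℝ)
      = (w (π 0) * ((starDist n (Equiv.swap 0 v (π⁻¹ (π 0))) (π 0) : ℝ)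
          - (starDist n (π⁻¹ (π 0)) (π 0) : ℝ)))
        + (w (π v) * ((starDist n (Equiv.swap 0 v (π⁻¹ (π v))) (π v) : ℝ)
          - (starDist n (π⁻¹ (π v)) (π v) : ℝ))) := by
    rw [← Finset.sum_sub_distrib]
    rw [hsplit (fun y => w y * (starDist n ((π * Equiv.swap 0 v)⁻¹ y) y : ℝ)
        - w y * (starDist n (π⁻¹ y) y : ℝ))
      (fun y h1 h2 => by rw [key y h1 h2]; ring)]
    rw [hinv, hinv]; ring
  have hp0 : π⁻¹ (π 0) = 0 := Equiv.symm_apply_apply π 0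
  have hpv : π⁻¹ (π v) = v := Equiv.symm_apply_apply π v
  rw [hp0, hpv, Equiv.swap_apply_left, Equiv.swap_apply_right] at heq
  have hDu : (starDist n v (π 0) : ℝ) - (starDist n 0 (π 0) : ℝ)
      = if π 0 = v then -1 else 1 := by
    rcases eq_or_ne (π 0) v with h | h
    · simp [starDist, h, hv, Ne.symm hv]
    · rcases eq_or_ne (π 0) 0 with h0 | h0
      · simp [starDist, h0, hv, Ne.symm hv, h]
      · simp [starDist, (Ne.symm h), Ne.symm h0, Ne.symm hv, hv, h0, h]
        norm_num
  have hDt : (starDist n 0 (π v) : ℝ) - (starDist n v (π v) : ℝ)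
      = if π v = v then 1 else -1 := by
    rcases eq_or_ne (π v) v with h | h
    · simp [starDist, h, hv, Ne.symm hv]
    · rcases eq_or_ne (π v) 0 with h0 | h0
      · simp [starDist, h0, hv, Ne.symm hv, h]
      · simp [starDist, Ne.symm h, Ne.symm h0, Ne.symm hv, hv, h0, h]
        norm_num
  rw [hDu, hDt] at heq
  have hgoal : Dw n w (π * Equiv.swap 0 v) - Dw n w π
      = w (π 0) * (if π 0 = v then (-1:ℝ) else 1)
        + w (π v) * (if π v = v then (1:ℝ) else -1) := heq
  split_ifs at hgoal ⊢ <;> linarith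

end Swaps

section Chunk4
variable {n : ℕ} {π : Equiv.Perm (Fin (n + 1))} {v : Fin (n + 1)}

lemma mem_cycOrbit {z y : Fin (n+1)} :
    y ∈ insert z (π.cycleOf z).support ↔ π.SameCycle z y := by
  rw [Finset.mem_insert, Equiv.Perm.mem_support_cycleOf_iff]
  constructor
  · rintro (rfl | ⟨h, -⟩)
    · exact SameCycle.refl _ _
    · exact h
  · intro h
    by_cases h0 : π z = z
    · exact Or.inl (eq_of_sameCycle_fixed h0 h).symm.symm
    · exact Or.inr ⟨h, Equiv.Perm.mem_support.mpr h0⟩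

lemma Xset_mul_swap_merge (hv : v ≠ 0) (h : ¬ π.SameCycle 0 v) :
    Xset n (π * Equiv.swap 0 v) = Xset n π ∪ insert v (π.cycleOf v).support := by
  ext y
  rw [Finset.mem_union, mem_Xset, mem_Xset, mem_cycOrbit]
  exact sameCycle_mul_swap_iff h y

lemma Xset_mul_swap_place (hv : v ≠ 0) (h0 : π 0 = v) :
    Xset n (π * Equiv.swap 0 v) = (Xset n π).erase v := by
  have hS : π.SameCycle 0 v := ⟨1, by simpa using h0⟩
  have hvfix : (π * Equiv.swap 0 v) v = v := by
    rw [Equiv.Perm.mul_apply, Equiv.swap_apply_right, h0]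
  have hnot := not_sameCycle_mul_swap (Ne.symm hv) hS
  ext y
  rw [Finset.mem_erase, mem_Xset, mem_Xset]
  constructor
  · intro hy
    constructor
    · rintro rfl; exact hnot hy
    · exact (sameCycle_split (Ne.symm hv) hS y).mpr (Or.inl hy)
  · rintro ⟨hyv, hy⟩
    rcases (sameCycle_split (Ne.symm hv) hS y).mp hy with h1 | h1
    · exact h1
    · exact absurd (eq_of_sameCycle_fixed hvfix h1) hyv

lemma Xset_mul_swap_split_subset (hv : v ≠ 0) (hS : π.SameCycle 0 v) :
    Xset n (π * Equiv.swap 0 v) ⊆ Xset n π := by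
  intro y hy
  rw [mem_Xset] at hy ⊢
  exact (sameCycle_split (Ne.symm hv) hS y).mpr (Or.inl hy)

end Chunk4

/-- the `min{...}` term of the potential. -/
noncomputable def mTerm (n : ℕ) (w : Fin (n + 1) → ℝ) (π : Equiv.Perm (Fin (n + 1))) : ℝ :=
  if h : (Hset n π).Nonempty then
    min ((Aset n π).inf' Aset_nonempty w * ((lockC n π : ℝ) - 1))
        ((Hset n π).inf' h w * ((lockC n π : ℝ) + 1))
  else (Aset n π).inf' Aset_nonempty w * ((lockC n π : ℝ) - 1)

/-- the extra-cost potential `G`. -/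
noncomputable def Gpot (n : ℕ) (w : Fin (n + 1) → ℝ) (π : Equiv.Perm (Fin (n + 1))) : ℝ :=
  if lockC n π = 0 then 0 else (Xset n π).inf' Xset_nonempty w + mTerm n w π

/-- the full potential `F = D_w + 2G`. -/
noncomputable def Fpot (n : ℕ) (w : Fin (n + 1) → ℝ) (π : Equiv.Perm (Fin (n + 1))) : ℝ :=
  Dw n w π + 2 * Gpot n w π

section Chunk4b
variable {n : ℕ} {w : Fin (n + 1) → ℝ} {π : Equiv.Perm (Fin (n + 1))} {v : Fin (n + 1)}

lemma inf'_pos (hw : ∀ t, 0 < w t) {s : Finset (Fin (n+1))} (hs : s.Nonempty) :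
    0 < s.inf' hs w := by
  obtain ⟨i, -, hi⟩ := Finset.exists_mem_eq_inf' hs w
  rw [hi]; exact hw i

lemma mTerm_nonneg (hw : ∀ t, 0 < w t) (hl : 1 ≤ lockC n π) : 0 ≤ mTerm n w π := by
  have h1 : (0:ℝ) ≤ (Aset n π).inf' Aset_nonempty w * ((lockC n π : ℝ) - 1) := by
    apply mul_nonneg (inf'_pos hw _).le
    have : (1:ℝ) ≤ (lockC n π : ℝ) := by exact_mod_cast hl
    linarith
  unfold mTerm
  split_ifs with h
  · apply le_min h1
    apply mul_nonneg (inf'_pos hw h).le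
    positivity
  · exact h1

lemma Gpot_nonneg (hw : ∀ t, 0 < w t) : 0 ≤ Gpot n w π := by
  unfold Gpot
  split_ifs with h
  · exact le_refl 0
  · have hl : 1 ≤ lockC n π := Nat.one_le_iff_ne_zero.mpr h
    have := mTerm_nonneg (π := π) hw hl
    have := inf'_pos hw (Xset_nonempty (π := π))
    linarith

lemma lockC_one : lockC n (1 : Equiv.Perm (Fin (n+1))) = 0 := by
  simp [lockC, Equiv.Perm.cycleFactorsFinset_one]

lemma Dw_one : Dw n w (1 : Equiv.Perm (Fin (n+1))) = 0 := by
  unfold Dw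
  apply Finset.sum_eq_zero
  intro t _
  simp [starDist]

lemma Fpot_one : Fpot n w (1 : Equiv.Perm (Fin (n+1))) = 0 := by
  unfold Fpot Gpot
  rw [Dw_one, lockC_one, if_pos rfl]
  ring

end Chunk4b

section LocalLB
variable {n : ℕ} {w : Fin (n + 1) → ℝ} {π : Equiv.Perm (Fin (n + 1))} {v : Fin (n + 1)}


lemma inf'_eq_of_eq {n : ℕ} {w : Fin (n+1) → ℝ} {s t : Finset (Fin (n+1))} (h : s = t)
    (hs : s.Nonempty) : s.inf' hs w = t.inf' (h ▸ hs) w := by subst h; rfl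

lemma mTerm_le :
    mTerm n w π ≤ (Aset n π).inf' Aset_nonempty w * ((lockC n π : ℝ) - 1) := by
  unfold mTerm
  split_ifs with h
  · exact min_le_left _ _
  · exact le_rfl

lemma Gpot_le_of_ne (hl : lockC n π ≠ 0) :
    Gpot n w π = (Xset n π).inf' Xset_nonempty w + mTerm n w π := by
  unfold Gpot; rw [if_neg hl]


lemma mTerm_eq_of_sets {n : ℕ} {w : Fin (n+1) → ℝ} {π q : Equiv.Perm (Fin (n + 1))}
    (hH : Hset n q = Hset n π) (hA : Aset n q = Aset n π) :
    mTerm n w q = (if h : (Hset n π).Nonempty then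
      min ((Aset n π).inf' Aset_nonempty w * ((lockC n q : ℝ) - 1))
          ((Hset n π).inf' h w * ((lockC n q : ℝ) + 1))
    else (Aset n π).inf' Aset_nonempty w * ((lockC n q : ℝ) - 1)) := by
  unfold mTerm
  by_cases hne : (Hset n π).Nonempty
  · rw [dif_pos (hH ▸ hne), dif_pos hne, inf'_eq_of_eq hA, inf'_eq_of_eq hH]
  · rw [dif_neg (by rw [hH]; exact hne), dif_neg hne, inf'_eq_of_eq hA]

/-- The key local inequality for the lower bound. -/
lemma key_LB (hw : ∀ t, 0 < w t) (hv : v ≠ 0) :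
    Gpot n w π ≤ (if π 0 = v then 0 else w (π 0)) + (if π v = v then w (π v) else 0)
      + Gpot n w (π * Equiv.swap 0 v) := by
  classical
  set q := π * Equiv.swap 0 v with hq
  have hG' := Gpot_nonneg (n := n) (w := w) (π := q) hw
  by_cases hl : lockC n π = 0
  · rw [Gpot, if_pos hl]
    have h1 : (0:ℝ) ≤ (if π 0 = v then 0 else w (π 0)) := by
      split_ifs with h; exact le_rfl; exact (hw _).le
    have h2 : (0:ℝ) ≤ (if π v = v then w (π v) else 0) := by
      split_ifs with h; exact (hw _).le; exact le_rfl
    linarith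
  -- now ℓ ≥ 1
  have hL1 : 1 ≤ lockC n π := Nat.one_le_iff_ne_zero.mpr hl
  have hL1R : (1:ℝ) ≤ (lockC n π : ℝ) := by exact_mod_cast hL1
  have hwxu : (Xset n π).inf' Xset_nonempty w ≤ w (π 0) :=
    Finset.inf'_le w pi_zero_mem_Xset
  have hwax : (Aset n π).inf' Aset_nonempty w ≤ (Xset n π).inf' Xset_nonempty w :=
    Finset.inf'_mono (f := w) Xset_subset_Aset Xset_nonempty
  have hwa0 : 0 < (Aset n π).inf' Aset_nonempty w := inf'_pos hw _
  have hwx0 : 0 < (Xset n π).inf' Xset_nonempty w := inf'_pos hw _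
  by_cases htv : π v = v
  · -- Case A : v carries a happy token
    have hS : ¬ π.SameCycle 0 v := fun h => hv (eq_of_sameCycle_fixed htv h.symm).symm
    have huv : π 0 ≠ v := by
      intro h
      exact hv (π.injective (h.trans htv.symm)).symm
    have hLq : lockC n q = lockC n π := by
      have h := lockC_mul_swap (π := π) hv
      rw [if_neg (fun hc => hc.1 htv), if_neg (fun hc => hS hc.2)] at h
      simpa using h
    have hvH : v ∈ Hset n π := mem_Hset.mpr ⟨htv, hv⟩
    have hHne : (Hset n π).Nonempty := ⟨v, hvH⟩
    have hX' : Xset n q = insert v (Xset n π) := by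
      ext y
      rw [hq, mem_Xset, Finset.mem_insert, mem_Xset, sameCycle_mul_swap_iff hS y]
      constructor
      · rintro (h1 | h1)
        · exact Or.inr h1
        · exact Or.inl (eq_of_sameCycle_fixed htv h1).symm.symm
      · rintro (rfl | h1)
        · exact Or.inr (SameCycle.refl _ _)
        · exact Or.inl h1
    have hH' : Hset n q = (Hset n π).erase v := by rw [hq, Hset_mul_swap hv, if_neg huv]
    have hA' : Aset n q = insert v (Aset n π) := by rw [hq, Aset_mul_swap hv, if_neg huv]
    set wx := (Xset n π).inf' Xset_nonempty w with hwxd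
    set wa := (Aset n π).inf' Aset_nonempty w with hwad
    set wh := (Hset n π).inf' hHne w with hwhd
    set L : ℝ := (lockC n π : ℝ) with hLd
    have hwh : wh ≤ w v := Finset.inf'_le w hvH
    have hwhpos : 0 < wh := inf'_pos hw _
    have hwv : 0 < w v := hw v
    have hwx' : (Xset n q).inf' Xset_nonempty w = min (w v) wx := by
      rw [inf'_eq_of_eq hX' _, Finset.inf'_insert]
    have hwa' : (Aset n q).inf' Aset_nonempty w = min (w v) wa := by
      rw [inf'_eq_of_eq hA' _, Finset.inf'_insert]
    have hmπ : mTerm n w π = min (wa * (L - 1)) (wh * (L + 1)) := by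
      unfold mTerm; rw [dif_pos hHne]
    have hmq_le : ∀ hH'ne : (Hset n q).Nonempty, wh ≤ (Hset n q).inf' hH'ne w := by
      intro hH'ne
      have hsub : Hset n q ⊆ Hset n π := by
        rw [hH']; exact Finset.erase_subset v (Hset n π)
      exact Finset.inf'_mono (f := w) hsub hH'ne
    rw [if_neg huv, if_pos htv, htv]
    rw [Gpot_le_of_ne hl, Gpot_le_of_ne (by rw [hLq]; exact hl), hwx', hmπ]
    have hL0 : (0:ℝ) ≤ L - 1 := by linarith
    have hL2 : (0:ℝ) ≤ L + 1 := by linarith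
    -- arithmetic
    rcases le_total wa (w v) with h1 | h1
    · have hwaq : min (w v) wa = wa := min_eq_right h1
      have hmm : min (wa * (L - 1)) (wh * (L + 1)) ≤ mTerm n w q := by
        unfold mTerm
        split_ifs with hH'ne
        · rw [hwa', hwaq]
          apply le_min
          · rw [hLq, ← hLd]; exact min_le_left _ _
          · rw [hLq, ← hLd]
            calc min (wa * (L - 1)) (wh * (L + 1)) ≤ wh * (L + 1) := min_le_right _ _
              _ ≤ (Hset n q).inf' hH'ne w * (L + 1) :=
                  mul_le_mul_of_nonneg_right (hmq_le hH'ne) hL2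
        · rw [hwa', hwaq, hLq, ← hLd]; exact min_le_left _ _
      have h3 : 0 < min (w v) wx := lt_min hwv hwx0
      linarith
    · have hwaq : min (w v) wa = w v := min_eq_left h1
      have hwvx : w v ≤ wx := le_trans h1 hwax
      have hminx : min (w v) wx = w v := min_eq_left hwvx
      rw [hminx]
      have hmle : min (wa * (L - 1)) (wh * (L + 1)) ≤ wh * (L + 1) := min_le_right _ _
      have hwhv : wh * (L + 1) ≤ w v * (L + 1) := mul_le_mul_of_nonneg_right hwh hL2
      have hval : w v * (L + 1) = w v * (L - 1) + 2 * w v := by ring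
      unfold mTerm
      split_ifs with hH'ne
      · rw [hwa', hwaq, hLq, ← hLd]
        rcases le_total (w v * (L - 1)) ((Hset n q).inf' hH'ne w * (L + 1)) with h2 | h2
        · rw [min_eq_left h2]
          linarith
        · rw [min_eq_right h2]
          have : wh * (L + 1) ≤ (Hset n q).inf' hH'ne w * (L + 1) :=
            mul_le_mul_of_nonneg_right (hmq_le hH'ne) hL2
          linarith
      · rw [hwa', hwaq, hLq, ← hLd]
        linarith

  · by_cases huv : π 0 = v
    · -- Case C : placing the center token home
      have hS : π.SameCycle 0 v := ⟨1, by simpa using huv⟩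
      have hLq : lockC n q = lockC n π := by
        have h := lockC_mul_swap (π := π) hv
        rw [if_neg (fun hc => hc.2 hS), if_neg (fun hc => hc.1 huv)] at h
        simpa using h
      have hX' : Xset n q = (Xset n π).erase v := Xset_mul_swap_place hv huv
      have hH' : Hset n q = insert v (Hset n π) := by
        rw [hq, Hset_mul_swap hv, if_pos huv]
      have hA' : Aset n q = (Aset n π).erase v := by
        rw [hq, Aset_mul_swap hv, if_pos huv]
      have hvX : v ∈ Xset n π := mem_Xset.mpr hS
      have hvA : v ∈ Aset n π := Xset_subset_Aset hvX
      have hwav : (Aset n π).inf' Aset_nonempty w ≤ w v := Finset.inf'_le w hvA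
      set wx := (Xset n π).inf' Xset_nonempty w with hwxd
      set wa := (Aset n π).inf' Aset_nonempty w with hwad
      set L : ℝ := (lockC n π : ℝ) with hLd
      have hL0 : (0:ℝ) ≤ L - 1 := by linarith
      have hL2 : (0:ℝ) ≤ L + 1 := by linarith
      have hwxx' : wx ≤ (Xset n q).inf' Xset_nonempty w := by
        apply Finset.inf'_mono (f := w) _ Xset_nonempty
        rw [hX']; exact Finset.erase_subset v (Xset n π)
      have hwaa' : wa ≤ (Aset n q).inf' Aset_nonempty w := by
        apply Finset.inf'_mono (f := w) _ Aset_nonempty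
        rw [hA']; exact Finset.erase_subset v (Aset n π)
      have hH'ne : (Hset n q).Nonempty := by
        rw [hH']; exact Finset.insert_nonempty v _
      have hmm : mTerm n w π ≤ mTerm n w q := by
        have hm1 : mTerm n w π ≤ wa * (L - 1) := mTerm_le
        have hmq : mTerm n w q = min ((Aset n q).inf' Aset_nonempty w * (L - 1))
            ((Hset n q).inf' hH'ne w * (L + 1)) := by
          unfold mTerm; rw [dif_pos hH'ne, hLq]
        rw [hmq]
        apply le_min
        · exact le_trans hm1 (mul_le_mul_of_nonneg_right hwaa' hL0)
        · by_cases hHne : (Hset n π).Nonempty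
          · have hwh' : (Hset n q).inf' hH'ne w
                = min (w v) ((Hset n π).inf' hHne w) := by
              rw [inf'_eq_of_eq hH' _, Finset.inf'_insert]
            rw [hwh']
            rcases le_total (w v) ((Hset n π).inf' hHne w) with h2 | h2
            · rw [min_eq_left h2]
              calc mTerm n w π ≤ wa * (L - 1) := hm1
                _ ≤ w v * (L - 1) := mul_le_mul_of_nonneg_right hwav hL0
                _ ≤ w v * (L + 1) := mul_le_mul_of_nonneg_left (by linarith) (hw v).le
            · rw [min_eq_right h2]
              have : mTerm n w π = min (wa * (L - 1)) ((Hset n π).inf' hHne w * (L + 1)) := by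
                unfold mTerm; rw [dif_pos hHne]
              rw [this]; exact min_le_right _ _
          · have hHe : Hset n π = ∅ := Finset.not_nonempty_iff_eq_empty.mp hHne
            have hsingle : Hset n q = {v} := by rw [hH', hHe]; rfl
            have hwh' : (Hset n q).inf' hH'ne w = w v := by
              rw [inf'_eq_of_eq hsingle hH'ne]
              exact Finset.inf'_singleton w
            rw [hwh']
            calc mTerm n w π ≤ wa * (L - 1) := hm1
              _ ≤ w v * (L - 1) := mul_le_mul_of_nonneg_right hwav hL0
              _ ≤ w v * (L + 1) := mul_le_mul_of_nonneg_left (by linarith) (hw v).le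
      rw [if_pos huv, if_neg htv]
      rw [Gpot_le_of_ne hl, Gpot_le_of_ne (by rw [hLq]; exact hl)]
      linarith
    · by_cases hS : π.SameCycle 0 v
      · -- Case D : splitting the unlocked cycle
        have hLq : lockC n q = lockC n π + 1 := by
          have h := lockC_mul_swap (π := π) hv
          rw [if_neg (fun hc => hc.2 hS), if_pos ⟨huv, hS⟩] at h
          simpa using h
        have hHq : Hset n q = Hset n π := by
          rw [hq, Hset_mul_swap hv, if_neg huv,
            Finset.erase_eq_self.mpr (fun hc => htv (mem_Hset.mp hc).1)]
        have hAq : Aset n q = Aset n π := by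
          rw [hq, Aset_mul_swap hv, if_neg huv,
            Finset.insert_eq_self.mpr (mem_Aset.mpr (Or.inl htv))]
        have hwxx' : (Xset n π).inf' Xset_nonempty w ≤ (Xset n q).inf' Xset_nonempty w :=
          Finset.inf'_mono (f := w) (Xset_mul_swap_split_subset hv hS) Xset_nonempty
        set wx := (Xset n π).inf' Xset_nonempty w with hwxd
        set wa := (Aset n π).inf' Aset_nonempty w with hwad
        set L : ℝ := (lockC n π : ℝ) with hLd
        have hL0 : (0:ℝ) ≤ L - 1 := by linarith
        have hLqR : (lockC n q : ℝ) = L + 1 := by rw [hLq]; push_cast; ring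
        have hmm : mTerm n w π ≤ mTerm n w q := by
          rw [mTerm_eq_of_sets hHq hAq, hLqR]
          unfold mTerm
          by_cases hHne : (Hset n π).Nonempty
          · rw [dif_pos hHne, dif_pos hHne]
            apply le_min
            · calc min (wa * (L-1)) ((Hset n π).inf' hHne w * (L+1)) ≤ wa * (L-1) :=
                  min_le_left _ _
                _ ≤ wa * (L+1-1) := mul_le_mul_of_nonneg_left (by linarith) hwa0.le
            · calc min (wa * (L-1)) ((Hset n π).inf' hHne w * (L+1))
                  ≤ (Hset n π).inf' hHne w * (L+1) := min_le_right _ _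
                _ ≤ (Hset n π).inf' hHne w * (L+1+1) :=
                  mul_le_mul_of_nonneg_left (by linarith) (inf'_pos hw hHne).le
          · rw [dif_neg hHne, dif_neg hHne]
            exact mul_le_mul_of_nonneg_left (by linarith) hwa0.le
        rw [if_neg huv, if_neg htv]
        rw [Gpot_le_of_ne hl, Gpot_le_of_ne (by omega)]
        have hu0 : 0 < w (π 0) := hw _
        linarith
      · -- Case B : merging with a locked cycle
        have hLq : lockC n q + 1 = lockC n π := by
          have h := lockC_mul_swap (π := π) hv
          rw [if_pos ⟨htv, hS⟩, if_neg (fun hc => hS hc.2)] at h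
          simpa using h
        have hHq : Hset n q = Hset n π := by
          rw [hq, Hset_mul_swap hv, if_neg huv,
            Finset.erase_eq_self.mpr (fun hc => htv (mem_Hset.mp hc).1)]
        have hAq : Aset n q = Aset n π := by
          rw [hq, Aset_mul_swap hv, if_neg huv,
            Finset.insert_eq_self.mpr (mem_Aset.mpr (Or.inl htv))]
        set wx := (Xset n π).inf' Xset_nonempty w with hwxd
        set wa := (Aset n π).inf' Aset_nonempty w with hwad
        set L : ℝ := (lockC n π : ℝ) with hLd
        rw [if_neg huv, if_neg htv, Gpot_le_of_ne hl]
        by_cases hl' : lockC n q = 0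
        · -- ℓ = 1, the merge removes the last locked cycle
          have hL1' : (L : ℝ) = 1 := by
            rw [hLd]
            have : lockC n π = 1 := by omega
            rw [this]; norm_num
          have hm0 : mTerm n w π ≤ 0 := by
            have := mTerm_le (n := n) (w := w) (π := π)
            rw [← hwad, ← hLd] at this
            rw [hL1'] at this
            simpa using this
          rw [Gpot, if_pos hl']
          linarith
        · have hL'1 : 1 ≤ lockC n q := Nat.one_le_iff_ne_zero.mpr hl'
          have hLqR : (lockC n q : ℝ) = L - 1 := by
            rw [hLd]
            have : lockC n π = lockC n q + 1 := hLq.symm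
            rw [this]; push_cast; ring
          have hL'R : (1:ℝ) ≤ L - 1 := by
            rw [← hLqR]; exact_mod_cast hL'1
          set wx' := (Xset n q).inf' Xset_nonempty w with hwx'd
          have hwaq : wa ≤ wx' := by
            have h := Finset.inf'_mono (f := w) (Xset_subset_Aset (π := q)) Xset_nonempty
            rw [inf'_eq_of_eq hAq] at h
            exact h
          rw [Gpot_le_of_ne hl', ← hwx'd]
          have harith : mTerm n w π ≤ wx' + mTerm n w q := by
            rw [mTerm_eq_of_sets hHq hAq, hLqR]
            by_cases hHne : (Hset n π).Nonempty
            · rw [dif_pos hHne]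
              set wh := (Hset n π).inf' hHne w with hwhd
              have hwhpos : 0 < wh := inf'_pos hw hHne
              have hmπ : mTerm n w π = min (wa * (L - 1)) (wh * (L + 1)) := by
                unfold mTerm; rw [dif_pos hHne]
              rw [hmπ]
              rcases le_total (wa * (L - 1 - 1)) (wh * (L - 1 + 1)) with h2 | h2
              · rw [min_eq_left h2]
                have h5 : min (wa * (L - 1)) (wh * (L + 1)) ≤ wa * (L - 1) := min_le_left _ _
                have hring : wa * (L - 1) = wa * (L - 1 - 1) + wa := by ring
                linarith
              · rw [min_eq_right h2]
                have hha : wh ≤ wa := by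
                  have h3 : wa * (L - 1 - 1) ≤ wa * (L - 1 + 1) :=
                    mul_le_mul_of_nonneg_left (by linarith) hwa0.le
                  have h4 : (0:ℝ) < L - 1 + 1 := by linarith
                  exact le_of_mul_le_mul_right (by linarith) h4
                have h5 : min (wa * (L - 1)) (wh * (L + 1)) ≤ wh * (L + 1) := min_le_right _ _
                have hring : wh * (L + 1) = wh * (L - 1 + 1) + wh := by ring
                linarith
            · rw [dif_neg hHne]
              have hmπ : mTerm n w π = wa * (L - 1) := by
                unfold mTerm; rw [dif_neg hHne]
              rw [hmπ]
              have hring : wa * (L - 1) = wa * (L - 1 - 1) + wa := by ring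
              linarith
          have hu0 : 0 < w (π 0) := hw _
          linarith

end LocalLB

section LBGlobal
variable {n : ℕ} {w : Fin (n + 1) → ℝ}

lemma local_LB (hw : ∀ t, 0 < w t) {π : Equiv.Perm (Fin (n+1))} {v : Fin (n+1)} (hv : v ≠ 0) :
    Fpot n w π ≤ (w (π 0) + w (π v)) + Fpot n w (π * Equiv.swap 0 v) := by
  have h := key_LB (π := π) hw hv
  unfold Fpot
  rw [Dw_mul_swap w hv]
  split_ifs at h ⊢ <;> linarith

lemma LB (hw : ∀ t, 0 < w t) :
    ∀ (s : List (Fin (n+1))) (π : Equiv.Perm (Fin (n+1))), (∀ v ∈ s, v ≠ 0) →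
      applyStarSwaps n π s = 1 → Fpot n w π ≤ starCost w s π := by
  intro s
  induction s with
  | nil =>
    intro π _ h1
    have : π = 1 := by simpa [applyStarSwaps] using h1
    rw [this, Fpot_one]
    simp [starCost]
  | cons v s ih =>
    intro π hval happ
    have hv : v ≠ 0 := hval v List.mem_cons_self
    have happ' : applyStarSwaps n (π * Equiv.swap 0 v) s = 1 := happ
    have h1 := ih (π * Equiv.swap 0 v) (fun u hu => hval u (List.mem_cons_of_mem v hu)) happ'
    have h2 := local_LB (π := π) hw hv
    show Fpot n w π ≤ (w (π 0) + w (π v)) + starCost w s (π * Equiv.swap 0 v)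
    linarith

end LBGlobal

section UBHelpers
variable {n : ℕ} {w : Fin (n + 1) → ℝ} {π : Equiv.Perm (Fin (n + 1))} {v : Fin (n + 1)}

lemma Xset_center_fixed (h0 : π 0 = 0) : Xset n π = {0} := by
  ext t
  rw [mem_Xset, Finset.mem_singleton]
  constructor
  · intro h; exact eq_of_sameCycle_fixed h0 h
  · rintro rfl; exact SameCycle.refl _ _

lemma wx_eq_center (hx0 : π 0 = 0 ∨ w (π 0) = (Xset n π).inf' Xset_nonempty w) :
    w (π 0) = (Xset n π).inf' Xset_nonempty w := by
  rcases hx0 with h0 | h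
  · rw [inf'_eq_of_eq (Xset_center_fixed h0) Xset_nonempty, Finset.inf'_singleton, h0]
  · exact h

lemma eq_one_of_lockC_zero (h0 : π 0 = 0) (hl : lockC n π = 0) : π = 1 := by
  by_contra hne
  have hCF : π.cycleFactorsFinset.Nonempty := by
    rw [Finset.nonempty_iff_ne_empty]
    intro h
    exact hne (Equiv.Perm.cycleFactorsFinset_eq_empty_iff.mp h)
  obtain ⟨c, hc⟩ := hCF
  have hc0 : c 0 = 0 := by
    by_contra hcc
    have h0supp : (0 : Fin (n+1)) ∈ c.support := Equiv.Perm.mem_support.mpr hcc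
    have := (Equiv.Perm.mem_cycleFactorsFinset_iff.mp hc).2 0 h0supp
    exact hcc (this.trans h0)
  have : c ∈ π.cycleFactorsFinset.filter fun c => c 0 = 0 := Finset.mem_filter.mpr ⟨hc, hc0⟩
  have := Finset.card_pos.mpr ⟨c, this⟩
  unfold lockC at hl
  omega

lemma exists_locked_token (hl : 1 ≤ lockC n π) :
    ∃ b, b ∈ Aset n π \ Xset n π := by
  have : (π.cycleFactorsFinset.filter fun c => c 0 = 0).Nonempty := by
    rw [← Finset.card_pos]; exact hl
  obtain ⟨c, hc⟩ := this
  rw [Finset.mem_filter] at hc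
  obtain ⟨hcmem, hc0⟩ := hc
  have hcyc := (Equiv.Perm.mem_cycleFactorsFinset_iff.mp hcmem).1
  obtain ⟨b, hb⟩ := hcyc.nonempty_support
  have hbmoves : π b ≠ b := by
    have := (Equiv.Perm.mem_cycleFactorsFinset_iff.mp hcmem).2 b hb
    rw [← this]; exact Equiv.Perm.mem_support.mp hb
  refine ⟨b, Finset.mem_sdiff.mpr ⟨mem_Aset.mpr (Or.inl hbmoves), ?_⟩⟩
  rw [mem_Xset]
  intro hSC
  by_cases h0 : π 0 = 0
  · exact hbmoves (eq_of_sameCycle_fixed h0 hSC ▸ h0)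
  · have hceq : c = π.cycleOf b := Equiv.Perm.cycle_is_cycleOf hb hcmem
    have : (0 : Fin (n+1)) ∈ c.support := by
      rw [hceq, Equiv.Perm.mem_support_cycleOf_iff]
      exact ⟨hSC.symm, Equiv.Perm.mem_support.mpr (fun h => hbmoves (by rw [h]))⟩
    rw [Equiv.Perm.mem_support] at this
    exact this hc0
  
lemma support_mul_swap_subset (hv : v ≠ 0) :
    (π * Equiv.swap 0 v).support ⊆ π.support ∪ {0, v} := by
  intro y hy
  rcases eq_or_ne y 0 with rfl | hy0
  · simp
  rcases eq_or_ne y v with rfl | hyv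
  · simp
  rw [Equiv.Perm.mem_support, Equiv.Perm.mul_apply,
    Equiv.swap_apply_of_ne_of_ne hy0 hyv] at hy
  exact Finset.mem_union_left _ (Equiv.Perm.mem_support.mpr hy)

lemma card_support_mul_swap (hv : v ≠ 0) :
    (π * Equiv.swap 0 v).support.card ≤ π.support.card + 2 := by
  calc (π * Equiv.swap 0 v).support.card ≤ (π.support ∪ {0, v}).card :=
      Finset.card_le_card (support_mul_swap_subset hv)
    _ ≤ π.support.card + ({0, v} : Finset (Fin (n+1))).card := Finset.card_union_le _ _
    _ ≤ π.support.card + 2 := by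
      have : ({0, v} : Finset (Fin (n+1))).card ≤ 2 := Finset.card_le_two
      omega

lemma support_place_ssubset (h0 : π 0 ≠ 0) :
    (π * Equiv.swap 0 (π 0)).support ⊂ π.support := by
  constructor
  · intro y hy
    rcases eq_or_ne y 0 with rfl | hy0
    · rw [Equiv.Perm.mem_support] at hy ⊢
      exact h0
    rcases eq_or_ne y (π 0) with rfl | hyv
    · exfalso
      rw [Equiv.Perm.mem_support, Equiv.Perm.mul_apply, Equiv.swap_apply_right] at hy
      exact hy rfl
    · rw [Equiv.Perm.mem_support, Equiv.Perm.mul_apply,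
        Equiv.swap_apply_of_ne_of_ne hy0 hyv] at hy
      exact Equiv.Perm.mem_support.mpr hy
  · intro hsub
    have h1 : π 0 ∈ π.support := by
      rw [Equiv.Perm.mem_support]
      intro h
      exact h0 (π.injective h)
    have h2 := hsub h1
    rw [Equiv.Perm.mem_support, Equiv.Perm.mul_apply, Equiv.swap_apply_right] at h2
    exact h2 rfl

end UBHelpers

section StepPlace
variable {n : ℕ} {w : Fin (n + 1) → ℝ} {π : Equiv.Perm (Fin (n + 1))}

lemma step_place (hw : ∀ t, 0 < w t) (h0 : π 0 ≠ 0)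
    (hcond : lockC n π = 0 ∨ (Xset n π).inf' Xset_nonempty w < w (π 0)) :
    lockC n (π * Equiv.swap 0 (π 0)) = lockC n π ∧
      Fpot n w π = (w (π 0) + w (π (π 0))) + Fpot n w (π * Equiv.swap 0 (π 0)) := by
  classical
  set v := π 0 with hvd
  set q := π * Equiv.swap 0 v with hq
  have hv : v ≠ 0 := h0
  have huv : π 0 = v := rfl
  have htv : π v ≠ v := by
    intro h
    exact h0 (π.injective (h.trans huv.symm) ▸ rfl)
  have hS : π.SameCycle 0 v := ⟨1, by simpa using huv⟩
  have hLq : lockC n q = lockC n π := by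
    have h := lockC_mul_swap (π := π) hv
    rw [if_neg (fun hc => hc.2 hS), if_neg (fun hc => hc.1 huv)] at h
    simpa using h
  have hDw : Dw n w q = Dw n w π - (w (π 0) + w (π v)) := by
    rw [hq, Dw_mul_swap w hv, if_pos huv, if_neg htv]
    ring
  have hG : Gpot n w π = Gpot n w q := by
    by_cases hl : lockC n π = 0
    · rw [Gpot, if_pos hl, Gpot, if_pos (by rw [hLq]; exact hl)]
    · have hx := hcond.resolve_left hl
      have hL1 : 1 ≤ lockC n π := Nat.one_le_iff_ne_zero.mpr hl
      have hL1R : (1:ℝ) ≤ (lockC n π : ℝ) := by exact_mod_cast hL1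
      set L : ℝ := (lockC n π : ℝ) with hLd
      have hL0 : (0:ℝ) ≤ L - 1 := by linarith
      have hX' : Xset n q = (Xset n π).erase v := Xset_mul_swap_place hv huv
      have hH' : Hset n q = insert v (Hset n π) := by
        rw [hq, Hset_mul_swap hv, if_pos huv]
      have hA' : Aset n q = (Aset n π).erase v := by
        rw [hq, Aset_mul_swap hv, if_pos huv]
      set wx := (Xset n π).inf' Xset_nonempty w with hwxd
      set wa := (Aset n π).inf' Aset_nonempty w with hwad
      have hwa0 : 0 < wa := inf'_pos hw _
      have hwax : wa ≤ wx := Finset.inf'_mono (f := w) Xset_subset_Aset Xset_nonempty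
      have hwav : wa < w v := lt_of_le_of_lt hwax hx
      -- inf' unchanged upon erasing a non-minimal element
      have hwx' : (Xset n q).inf' Xset_nonempty w = wx := by
        obtain ⟨i, hiX, hieq⟩ := Finset.exists_mem_eq_inf' (Xset_nonempty (π := π)) w
        have hiv : i ≠ v := by
          intro h
          rw [h] at hieq
          rw [hwxd, hieq] at hx
          exact lt_irrefl _ hx
        have hiX' : i ∈ Xset n q := by
          rw [hX', Finset.mem_erase]; exact ⟨hiv, hiX⟩
        apply le_antisymm
        · rw [hwxd, hieq]; exact Finset.inf'_le w hiX'
        · apply Finset.inf'_mono (f := w) _ Xset_nonempty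
          rw [hX']; exact Finset.erase_subset v _
      have hwa' : (Aset n q).inf' Aset_nonempty w = wa := by
        obtain ⟨i, hiX, hieq⟩ := Finset.exists_mem_eq_inf' (Aset_nonempty (π := π)) w
        have hiv : i ≠ v := by
          intro h
          rw [h] at hieq
          rw [hwad, hieq] at hwav
          exact lt_irrefl _ hwav
        have hiX' : i ∈ Aset n q := by
          rw [hA', Finset.mem_erase]; exact ⟨hiv, hiX⟩
        apply le_antisymm
        · rw [hwad, hieq]; exact Finset.inf'_le w hiX'
        · apply Finset.inf'_mono (f := w) _ Aset_nonempty
          rw [hA']; exact Finset.erase_subset v _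
      have hH'ne : (Hset n q).Nonempty := by
        rw [hH']; exact Finset.insert_nonempty _ _
      have hwv1 : wa * (L - 1) ≤ w v * (L + 1) := by
        calc wa * (L - 1) ≤ wa * (L + 1) :=
            mul_le_mul_of_nonneg_left (by linarith) hwa0.le
          _ ≤ w v * (L + 1) := mul_le_mul_of_nonneg_right hwav.le (by linarith)
      have hm : mTerm n w q = mTerm n w π := by
        have hmq : mTerm n w q = min (wa * (L - 1)) ((Hset n q).inf' hH'ne w * (L + 1)) := by
          unfold mTerm
          rw [dif_pos hH'ne, hwa', hLq]
        by_cases hHne : (Hset n π).Nonempty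
        · set wh := (Hset n π).inf' hHne w with hwhd
          have hwh' : (Hset n q).inf' hH'ne w = min (w v) wh := by
            rw [inf'_eq_of_eq hH' hH'ne, Finset.inf'_insert]
          have hmπ : mTerm n w π = min (wa * (L - 1)) (wh * (L + 1)) := by
            unfold mTerm; rw [dif_pos hHne]
          rw [hmq, hwh', hmπ]
          rcases le_total (w v) wh with h2 | h2
          · rw [min_eq_left h2]
            rw [min_eq_left hwv1, min_eq_left]
            calc wa * (L-1) ≤ w v * (L + 1) := hwv1
              _ ≤ wh * (L + 1) := mul_le_mul_of_nonneg_right h2 (by linarith)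
          · rw [min_eq_right h2]
        · have hHe : Hset n π = ∅ := Finset.not_nonempty_iff_eq_empty.mp hHne
          have hsingle : Hset n q = {v} := by rw [hH', hHe]; rfl
          have hwh' : (Hset n q).inf' hH'ne w = w v := by
            rw [inf'_eq_of_eq hsingle hH'ne]
            exact Finset.inf'_singleton w
          have hmπ : mTerm n w π = wa * (L - 1) := by
            unfold mTerm; rw [dif_neg hHne]
          rw [hmq, hwh', hmπ, min_eq_left hwv1]
      rw [Gpot_le_of_ne hl, Gpot_le_of_ne (by rw [hLq]; exact hl), hwx', hm]
  refine ⟨hLq, ?_⟩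
  unfold Fpot
  rw [hDw, ← hG]
  ring

end StepPlace

section StepDive
variable {n : ℕ} {w : Fin (n + 1) → ℝ} {π : Equiv.Perm (Fin (n + 1))}

lemma step_dive (hw : ∀ t, 0 < w t) (hL1 : 1 ≤ lockC n π)
    (hx0 : π 0 = 0 ∨ w (π 0) = (Xset n π).inf' Xset_nonempty w)
    (hplan : ∀ hH : (Hset n π).Nonempty,
      (Aset n π).inf' Aset_nonempty w * ((lockC n π : ℝ) - 1)
        ≤ (Hset n π).inf' hH w * ((lockC n π : ℝ) + 1))
    {b : Fin (n+1)} (hb : b ∈ Aset n π \ Xset n π)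
    (hbmin : ∀ y ∈ Aset n π \ Xset n π, w b ≤ w y) :
    π⁻¹ b ≠ 0 ∧ lockC n (π * Equiv.swap 0 (π⁻¹ b)) + 1 = lockC n π ∧
      Fpot n w π = (w (π 0) + w b) + Fpot n w (π * Equiv.swap 0 (π⁻¹ b)) := by
  classical
  obtain ⟨hbA, hbX⟩ := Finset.mem_sdiff.mp hb
  set v := π⁻¹ b with hvd
  set q := π * Equiv.swap 0 v with hq
  have hπv : π v = b := Equiv.apply_symm_apply π b
  have hbmoves : π b ≠ b := by
    intro h
    rcases mem_Aset.mp hbA with h1 | h1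
    · exact h1 h
    · exact hbX (h1 ▸ zero_mem_Xset)
  have htv : π v ≠ v := by
    intro h
    apply hbmoves
    have hbv : b = v := hπv.symm.trans h
    rw [hbv]
    exact h
  have hv : v ≠ 0 := by
    intro h
    apply hbX
    rw [← hπv, h]
    exact pi_zero_mem_Xset
  have hS : ¬ π.SameCycle 0 v := by
    intro h
    apply hbX
    rw [mem_Xset, ← hπv]
    exact sameCycle_apply_right.mpr h
  have huv : π 0 ≠ v := fun h => hS ⟨1, by simpa using h⟩
  have hLq : lockC n q + 1 = lockC n π := by
    have h := lockC_mul_swap (π := π) hv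
    rw [if_pos ⟨htv, hS⟩, if_neg (fun hc => hS hc.2)] at h
    simpa using h
  have hHq : Hset n q = Hset n π := by
    rw [hq, Hset_mul_swap hv, if_neg huv,
      Finset.erase_eq_self.mpr (fun hc => htv (mem_Hset.mp hc).1)]
  have hAq : Aset n q = Aset n π := by
    rw [hq, Aset_mul_swap hv, if_neg huv,
      Finset.insert_eq_self.mpr (mem_Aset.mpr (Or.inl htv))]
  have hX' : Xset n q = Xset n π ∪ insert v (π.cycleOf v).support :=
    Xset_mul_swap_merge hv hS
  refine ⟨hv, hLq, ?_⟩
  set wx := (Xset n π).inf' Xset_nonempty w with hwxd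
  set wa := (Aset n π).inf' Aset_nonempty w with hwad
  set wxq := (Xset n q).inf' Xset_nonempty w with hwxqd
  have hwu : w (π 0) = wx := wx_eq_center hx0
  have hwa0 : 0 < wa := inf'_pos hw _
  have hl : lockC n π ≠ 0 := by omega
  have hL1R : (1:ℝ) ≤ (lockC n π : ℝ) := by exact_mod_cast hL1
  set L : ℝ := (lockC n π : ℝ) with hLd
  -- wxq = wa
  have hwaq : wa ≤ wxq := by
    have h := Finset.inf'_mono (f := w) (Xset_subset_Aset (π := q)) Xset_nonempty
    rw [inf'_eq_of_eq hAq] at h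
    exact h
  have hbXq : b ∈ Xset n q := by
    rw [hX']
    exact Finset.mem_union_right _ (mem_cycOrbit.mpr ⟨1, by simpa using hπv⟩)
  have hwxqb : wxq ≤ w b := Finset.inf'_le w hbXq
  have hwxqx : wxq ≤ wx := by
    apply Finset.inf'_mono (f := w) _ Xset_nonempty
    rw [hX']; exact Finset.subset_union_left
  have hminwa : min wx (w b) ≤ wa := by
    apply Finset.le_inf'
    intro y hy
    by_cases hyX : y ∈ Xset n π
    · exact le_trans (min_le_left _ _) (Finset.inf'_le w hyX)
    · exact le_trans (min_le_right _ _) (hbmin y (Finset.mem_sdiff.mpr ⟨hy, hyX⟩))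
  have hwxq : wxq = wa := by
    apply le_antisymm _ hwaq
    calc wxq ≤ min wx (w b) := le_min hwxqx hwxqb
      _ ≤ wa := hminwa
  -- m π = wa (L-1)
  have hmπ : mTerm n w π = wa * (L - 1) := by
    unfold mTerm
    by_cases hHne : (Hset n π).Nonempty
    · rw [dif_pos hHne]
      exact min_eq_left (hplan hHne)
    · rw [dif_neg hHne]
  have hDw : Dw n w q = Dw n w π - (w (π 0) + w b) + 2 * w (π 0) := by
    rw [hq, Dw_mul_swap w hv, if_neg huv, if_neg htv, hπv]
    ring
  have hG : Gpot n w π = w (π 0) + Gpot n w q := by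
    rw [Gpot_le_of_ne hl, ← hwxd, hmπ, hwu]
    by_cases hl' : lockC n q = 0
    · rw [Gpot, if_pos hl']
      have : lockC n π = 1 := by omega
      have hLeq : L = 1 := by rw [hLd, this]; norm_num
      rw [hLeq]
      ring
    · have hLq1 : 1 ≤ lockC n q := Nat.one_le_iff_ne_zero.mpr hl'
      have hLqR : (lockC n q : ℝ) = L - 1 := by
        rw [hLd]
        have : lockC n π = lockC n q + 1 := hLq.symm
        rw [this]; push_cast; ring
      have hL2R : (2:ℝ) ≤ L := by
        have : 2 ≤ lockC n π := by omega
        rw [hLd]; exact_mod_cast this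
      have hmq : mTerm n w q = wa * (L - 1 - 1) := by
        unfold mTerm
        by_cases hHne : (Hset n q).Nonempty
        · rw [dif_pos hHne, inf'_eq_of_eq hAq, ← hwad, hLqR, inf'_eq_of_eq hHq]
          apply min_eq_left
          have hHπ : (Hset n π).Nonempty := by rwa [hHq] at hHne
          set wh := (Hset n π).inf' hHπ w with hwhd
          have hwh0 : 0 < wh := inf'_pos hw _
          have hp := hplan hHπ
          rw [← hwhd] at hp
          have h1 : wa * (L-1) * (L-2) ≤ wh * (L+1) * (L-2) :=
            mul_le_mul_of_nonneg_right hp (by linarith)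
          have h2 : wh * (L+1) * (L-2) ≤ wh * L * (L-1) := by nlinarith
          have h3 : wa * (L-1-1) * (L-1) ≤ wh * (L-1+1) * (L-1) := by nlinarith
          exact le_of_mul_le_mul_right h3 (by linarith)
        · rw [dif_neg hHne, inf'_eq_of_eq hAq, ← hwad, hLqR]
      rw [Gpot_le_of_ne hl', hmq, ← hwxqd, hwxq]
      ring
  unfold Fpot
  rw [hDw, hG]
  ring

end StepDive

section StepPark
variable {n : ℕ} {w : Fin (n + 1) → ℝ} {π : Equiv.Perm (Fin (n + 1))}

lemma step_park (hw : ∀ t, 0 < w t) (hL1 : 1 ≤ lockC n π)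
    (hx0 : π 0 = 0 ∨ w (π 0) = (Xset n π).inf' Xset_nonempty w)
    (hH : (Hset n π).Nonempty)
    (hplanB : (Hset n π).inf' hH w * ((lockC n π : ℝ) + 1)
      < (Aset n π).inf' Aset_nonempty w * ((lockC n π : ℝ) - 1))
    {v : Fin (n+1)} (hvH : v ∈ Hset n π) (hveq : w v = (Hset n π).inf' hH w) :
    v ≠ 0 ∧ lockC n (π * Equiv.swap 0 v) = lockC n π ∧
      Fpot n w π = (w (π 0) + w (π v)) + Fpot n w (π * Equiv.swap 0 v) ∧
      w ((π * Equiv.swap 0 v) 0)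
        = (Xset n (π * Equiv.swap 0 v)).inf' Xset_nonempty w ∧
      (∀ hH' : (Hset n (π * Equiv.swap 0 v)).Nonempty,
        (Aset n (π * Equiv.swap 0 v)).inf' Aset_nonempty w
            * ((lockC n (π * Equiv.swap 0 v) : ℝ) - 1)
          ≤ (Hset n (π * Equiv.swap 0 v)).inf' hH' w
            * ((lockC n (π * Equiv.swap 0 v) : ℝ) + 1)) := by
  classical
  obtain ⟨htv, hv⟩ := mem_Hset.mp hvH
  set q := π * Equiv.swap 0 v with hq
  have hS : ¬ π.SameCycle 0 v := fun h => hv (eq_of_sameCycle_fixed htv h.symm).symm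
  have huv : π 0 ≠ v := by
    intro h
    exact hv (π.injective (h.trans htv.symm)).symm
  have hLq : lockC n q = lockC n π := by
    have h := lockC_mul_swap (π := π) hv
    rw [if_neg (fun hc => hc.1 htv), if_neg (fun hc => hS hc.2)] at h
    simpa using h
  have hX' : Xset n q = insert v (Xset n π) := by
    ext y
    rw [hq, mem_Xset, Finset.mem_insert, mem_Xset, sameCycle_mul_swap_iff hS y]
    constructor
    · rintro (h1 | h1)
      · exact Or.inr h1
      · exact Or.inl (eq_of_sameCycle_fixed htv h1).symm.symm
    · rintro (rfl | h1)
      · exact Or.inr (SameCycle.refl _ _)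
      · exact Or.inl h1
  have hH' : Hset n q = (Hset n π).erase v := by rw [hq, Hset_mul_swap hv, if_neg huv]
  have hA' : Aset n q = insert v (Aset n π) := by rw [hq, Aset_mul_swap hv, if_neg huv]
  set wx := (Xset n π).inf' Xset_nonempty w with hwxd
  set wa := (Aset n π).inf' Aset_nonempty w with hwad
  set wh := (Hset n π).inf' hH w with hwhd
  set L : ℝ := (lockC n π : ℝ) with hLd
  have hL1R : (1:ℝ) ≤ L := by rw [hLd]; exact_mod_cast hL1
  have hwh0 : 0 < wh := inf'_pos hw _
  have hwa0 : 0 < wa := inf'_pos hw _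
  have hwax : wa ≤ wx := Finset.inf'_mono (f := w) Xset_subset_Aset Xset_nonempty
  have hwu : w (π 0) = wx := wx_eq_center hx0
  have hL2 : (2:ℝ) ≤ L := by
    rcases Nat.lt_or_ge (lockC n π) 2 with h2 | h2
    · exfalso
      have : lockC n π = 1 := by omega
      rw [hLd, this] at hplanB
      norm_num at hplanB
      nlinarith
    · rw [hLd]; exact_mod_cast h2
  have hwhwa : wh < wa := by
    have h1 : wa * (L - 1) ≤ wa * (L + 1) :=
      mul_le_mul_of_nonneg_left (by linarith) hwa0.le
    have h2 : wh * (L + 1) < wa * (L + 1) := lt_of_lt_of_le hplanB h1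
    exact lt_of_mul_lt_mul_right h2 (by linarith)
  have hwhx : wh < wx := lt_of_lt_of_le hwhwa hwax
  have hq0 : q 0 = v := by
    rw [hq, Equiv.Perm.mul_apply, Equiv.swap_apply_left, htv]
  have hwxq : (Xset n q).inf' Xset_nonempty w = wh := by
    rw [inf'_eq_of_eq hX' Xset_nonempty, Finset.inf'_insert, hveq, ← hwxd]
    exact min_eq_left hwhx.le
    exact Xset_nonempty
  have hwaq : (Aset n q).inf' Aset_nonempty w = wh := by
    rw [inf'_eq_of_eq hA' Aset_nonempty, Finset.inf'_insert, hveq, ← hwad]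
    exact min_eq_left hwhwa.le
    exact Aset_nonempty
  have hwhq : ∀ hH' : (Hset n q).Nonempty, wh ≤ (Hset n q).inf' hH' w := by
    intro hH'ne
    have hsub : Hset n q ⊆ Hset n π := by
      rw [hH']; exact Finset.erase_subset v (Hset n π)
    exact Finset.inf'_mono (f := w) hsub hH'ne
  have hplanq : ∀ hH' : (Hset n q).Nonempty,
      (Aset n q).inf' Aset_nonempty w * ((lockC n q : ℝ) - 1)
        ≤ (Hset n q).inf' hH' w * ((lockC n q : ℝ) + 1) := by
    intro hH'ne
    rw [hwaq, hLq, ← hLd]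
    calc wh * (L - 1) ≤ wh * (L + 1) := mul_le_mul_of_nonneg_left (by linarith) hwh0.le
      _ ≤ (Hset n q).inf' hH'ne w * (L + 1) :=
        mul_le_mul_of_nonneg_right (hwhq hH'ne) (by linarith)
  have hmq : mTerm n w q = wh * (L - 1) := by
    unfold mTerm
    by_cases hH'ne : (Hset n q).Nonempty
    · rw [dif_pos hH'ne, hwaq, hLq, ← hLd]
      apply min_eq_left
      calc wh * (L - 1) ≤ wh * (L + 1) := mul_le_mul_of_nonneg_left (by linarith) hwh0.le
        _ ≤ (Hset n q).inf' hH'ne w * (L + 1) :=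
          mul_le_mul_of_nonneg_right (hwhq hH'ne) (by linarith)
    · rw [dif_neg hH'ne, hwaq, hLq, ← hLd]
  have hmπ : mTerm n w π = wh * (L + 1) := by
    unfold mTerm
    rw [dif_pos hH]
    exact min_eq_right hplanB.le
  have hl : lockC n π ≠ 0 := by omega
  have hDw : Dw n w q = Dw n w π - (w (π 0) + w (π v)) + 2 * w (π 0) + 2 * w v := by
    rw [hq, Dw_mul_swap w hv, if_neg huv, if_pos htv, htv]
  have hGq : Gpot n w q = wh + wh * (L - 1) := by
    rw [Gpot_le_of_ne (by rw [hLq]; exact hl), hwxq, hmq]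
  have hGπ : Gpot n w π = wx + wh * (L + 1) := by
    rw [Gpot_le_of_ne hl, ← hwxd, hmπ]
  refine ⟨hv, hLq, ?_, ?_, hplanq⟩
  · unfold Fpot
    rw [hDw, hGq, hGπ, htv, hveq, hwu]
    ring
  · rw [hq0, hveq, hwxq]

end StepPark

section UB
variable {n : ℕ} {w : Fin (n + 1) → ℝ}

lemma UB (hw : ∀ t, 0 < w t) (π : Equiv.Perm (Fin (n+1))) :
    ∃ s : List (Fin (n+1)), (∀ v ∈ s, v ≠ 0) ∧ applyStarSwaps n π s = 1 ∧
      starCost w s π = Fpot n w π := by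
  classical
  suffices H : ∀ (N : ℕ) (π : Equiv.Perm (Fin (n+1))),
      5 * lockC n π + π.support.card ≤ N →
      ∃ s : List (Fin (n+1)), (∀ v ∈ s, v ≠ 0) ∧ applyStarSwaps n π s = 1 ∧
        starCost w s π = Fpot n w π by
    exact H _ π le_rfl
  intro N
  induction N with
  | zero =>
    intro π hμ
    have hsupp : π.support.card = 0 := by omega
    have hone : π = 1 := by
      rw [← Equiv.Perm.support_eq_empty_iff]
      exact Finset.card_eq_zero.mp hsupp
    subst hone
    exact ⟨[], by simp, by simp [applyStarSwaps], by rw [Fpot_one]; simp [starCost]⟩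
  | succ N ih =>
    intro π hμ
    by_cases hone : π = 1
    · subst hone
      exact ⟨[], by simp, by simp [applyStarSwaps], by rw [Fpot_one]; simp [starCost]⟩
    have hwxu : (Xset n π).inf' Xset_nonempty w ≤ w (π 0) :=
      Finset.inf'_le w pi_zero_mem_Xset
    by_cases hl : lockC n π = 0
    · -- sort the unlocked cycle
      have h0 : π 0 ≠ 0 := fun h => hone (eq_one_of_lockC_zero h hl)
      obtain ⟨hLq, hstep⟩ := step_place (π := π) hw h0 (Or.inl hl)
      set v := π 0 with hvd
      set q := π * Equiv.swap 0 v with hqd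
      have hμ' : 5 * lockC n q + q.support.card ≤ N := by
        have hcard : q.support.card < π.support.card :=
          Finset.card_lt_card (support_place_ssubset h0)
        rw [hLq]
        omega
      obtain ⟨s, hs1, hs2, hs3⟩ := ih q hμ'
      refine ⟨v :: s, ?_, hs2, ?_⟩
      · intro u hu
        rcases List.mem_cons.mp hu with rfl | hu
        · exact h0
        · exact hs1 u hu
      · show (w (π 0) + w (π v)) + starCost w s q = Fpot n w π
        rw [hs3, ← hstep]
    · have hL1 : 1 ≤ lockC n π := Nat.one_le_iff_ne_zero.mpr hl
      by_cases hxlt : (Xset n π).inf' Xset_nonempty w < w (π 0)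
      · -- place the center token home
        have h0 : π 0 ≠ 0 := by
          intro h
          rw [wx_eq_center (w := w) (Or.inl h)] at hxlt
          exact lt_irrefl _ hxlt
        obtain ⟨hLq, hstep⟩ := step_place (π := π) hw h0 (Or.inr hxlt)
        set v := π 0 with hvd
        set q := π * Equiv.swap 0 v with hqd
        have hμ' : 5 * lockC n q + q.support.card ≤ N := by
          have hcard : q.support.card < π.support.card :=
            Finset.card_lt_card (support_place_ssubset h0)
          rw [hLq]
          omega
        obtain ⟨s, hs1, hs2, hs3⟩ := ih q hμ'
        refine ⟨v :: s, ?_, hs2, ?_⟩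
        · intro u hu
          rcases List.mem_cons.mp hu with rfl | hu
          · exact h0
          · exact hs1 u hu
        · show (w (π 0) + w (π v)) + starCost w s q = Fpot n w π
          rw [hs3, ← hstep]
      · have hx0 : π 0 = 0 ∨ w (π 0) = (Xset n π).inf' Xset_nonempty w := by
          by_cases h : π 0 = 0
          · exact Or.inl h
          · exact Or.inr (le_antisymm (not_lt.mp hxlt) hwxu)
        by_cases hpB : ∃ hH : (Hset n π).Nonempty,
            (Hset n π).inf' hH w * ((lockC n π : ℝ) + 1)
              < (Aset n π).inf' Aset_nonempty w * ((lockC n π : ℝ) - 1)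
        · -- plan B : park the cheap unlocked token at the cheapest happy leaf, then dive
          obtain ⟨hH, hplanB⟩ := hpB
          obtain ⟨v, hvH, hveq⟩ := Finset.exists_mem_eq_inf' hH w
          obtain ⟨hv0, hLq, hFeq, hxq, hplanq⟩ :=
            step_park hw hL1 hx0 hH hplanB hvH hveq.symm
          set q := π * Equiv.swap 0 v with hqd
          have hL1q : 1 ≤ lockC n q := by rw [hLq]; exact hL1
          have hBne : (Aset n q \ Xset n q).Nonempty := exists_locked_token hL1q
          obtain ⟨b, hbB, hbeq⟩ := Finset.exists_mem_eq_inf' hBne w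
          have hbmin : ∀ y ∈ Aset n q \ Xset n q, w b ≤ w y := by
            intro y hy
            rw [← hbeq]
            exact Finset.inf'_le w hy
          obtain ⟨hv2, hLq2, hFeq2⟩ := step_dive hw hL1q (Or.inr hxq) hplanq hbB hbmin
          set v2 := q⁻¹ b with hv2d
          set q2 := q * Equiv.swap 0 v2 with hq2d
          have hμ' : 5 * lockC n q2 + q2.support.card ≤ N := by
            have hc1 : q.support.card ≤ π.support.card + 2 := card_support_mul_swap hv0
            have hc2 : q2.support.card ≤ q.support.card + 2 := card_support_mul_swap hv2
            have hL : lockC n q2 + 1 = lockC n π := by rw [hLq2, hLq]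
            omega
          obtain ⟨s, hs1, hs2, hs3⟩ := ih q2 hμ'
          refine ⟨v :: v2 :: s, ?_, hs2, ?_⟩
          · intro u hu
            rcases List.mem_cons.mp hu with rfl | hu
            · exact hv0
            rcases List.mem_cons.mp hu with rfl | hu
            · exact hv2
            · exact hs1 u hu
          · show (w (π 0) + w (π v)) + ((w (q 0) + w (q v2)) + starCost w s q2)
              = Fpot n w π
            have hqb : q v2 = b := Equiv.apply_symm_apply q b
            rw [hs3, hqb, ← hFeq2, ← hFeq]
        · -- plan A : dive into a locked cycle using the cheapest active token
          have hplan : ∀ hH : (Hset n π).Nonempty,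
              (Aset n π).inf' Aset_nonempty w * ((lockC n π : ℝ) - 1)
                ≤ (Hset n π).inf' hH w * ((lockC n π : ℝ) + 1) := by
            intro hH
            by_contra hcon
            exact hpB ⟨hH, not_le.mp hcon⟩
          have hBne : (Aset n π \ Xset n π).Nonempty := exists_locked_token hL1
          obtain ⟨b, hbB, hbeq⟩ := Finset.exists_mem_eq_inf' hBne w
          have hbmin : ∀ y ∈ Aset n π \ Xset n π, w b ≤ w y := by
            intro y hy
            rw [← hbeq]
            exact Finset.inf'_le w hy
          obtain ⟨hv2, hLq2, hFeq2⟩ := step_dive hw hL1 hx0 hplan hbB hbmin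
          set v2 := π⁻¹ b with hv2d
          set q2 := π * Equiv.swap 0 v2 with hq2d
          have hμ' : 5 * lockC n q2 + q2.support.card ≤ N := by
            have hc2 : q2.support.card ≤ π.support.card + 2 := card_support_mul_swap hv2
            omega
          obtain ⟨s, hs1, hs2, hs3⟩ := ih q2 hμ'
          refine ⟨v2 :: s, ?_, hs2, ?_⟩
          · intro u hu
            rcases List.mem_cons.mp hu with rfl | hu
            · exact hv2
            · exact hs1 u hu
          · show (w (π 0) + w (π v2)) + starCost w s q2 = Fpot n w π
            have hqb : π v2 = b := Equiv.apply_symm_apply π b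
            rw [hs3, hqb, ← hFeq2]

end UB

/-- The minimum cost of weighted token swapping on a star is
`D_w + 2w(x) + 2·min{w(a)(ℓ−1), w(h)(ℓ+1)}` when `ℓ ≥ 1` (with the `w(h)` term
omitted when no happy leaf exists), and `D_w` when `ℓ = 0`; here `x`, `a`, `h` are
minimum-weight tokens in the unlocked cycle, among active tokens, and on happy
leaves, respectively. -/
theorem stmt12 (n : ℕ) (w : Fin (n + 1) → ℝ) (hw : ∀ t, 0 < w t)
    (π : Equiv.Perm (Fin (n + 1)))
    (hX : (Xset n π).Nonempty) (hA : (Aset n π).Nonempty) :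
    (lockC n π = 0 →
      IsLeast {c : ℝ | ∃ s : List (Fin (n + 1)), (∀ v ∈ s, v ≠ 0) ∧
          applyStarSwaps n π s = 1 ∧ starCost w s π = c}
        (Dw n w π)) ∧
    (1 ≤ lockC n π →
      ∀ hH : (Hset n π).Nonempty,
      IsLeast {c : ℝ | ∃ s : List (Fin (n + 1)), (∀ v ∈ s, v ≠ 0) ∧
          applyStarSwaps n π s = 1 ∧ starCost w s π = c}
        (Dw n w π + 2 * (Xset n π).inf' hX w +
          2 * min ((Aset n π).inf' hA w * ((lockC n π : ℝ) - 1))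
                  ((Hset n π).inf' hH w * ((lockC n π : ℝ) + 1)))) ∧
    (1 ≤ lockC n π → Hset n π = ∅ →
      IsLeast {c : ℝ | ∃ s : List (Fin (n + 1)), (∀ v ∈ s, v ≠ 0) ∧
          applyStarSwaps n π s = 1 ∧ starCost w s π = c}
        (Dw n w π + 2 * (Xset n π).inf' hX w +
          2 * ((Aset n π).inf' hA w * ((lockC n π : ℝ) - 1)))) := by
  have hmem : ∀ (c : ℝ), Fpot n w π = c →
      c ∈ {c : ℝ | ∃ s : List (Fin (n + 1)), (∀ v ∈ s, v ≠ 0) ∧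
        applyStarSwaps n π s = 1 ∧ starCost w s π = c} := by
    intro c hc
    obtain ⟨s, h1, h2, h3⟩ := UB hw π
    exact ⟨s, h1, h2, by rw [h3, hc]⟩
  have hlb : ∀ (c : ℝ), c ∈ {c : ℝ | ∃ s : List (Fin (n + 1)), (∀ v ∈ s, v ≠ 0) ∧
      applyStarSwaps n π s = 1 ∧ starCost w s π = c} → Fpot n w π ≤ c := by
    rintro c ⟨s, h1, h2, h3⟩
    rw [← h3]
    exact LB hw s π h1 h2
  refine ⟨?_, ?_, ?_⟩
  · intro hl
    have hF : Fpot n w π = Dw n w π := by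
      unfold Fpot Gpot
      rw [if_pos hl]
      ring
    exact ⟨hmem _ hF, fun c hc => hF ▸ hlb c hc⟩
  · intro hL1 hH
    have hl : lockC n π ≠ 0 := by omega
    have hF : Fpot n w π = Dw n w π + 2 * (Xset n π).inf' hX w +
        2 * min ((Aset n π).inf' hA w * ((lockC n π : ℝ) - 1))
                ((Hset n π).inf' hH w * ((lockC n π : ℝ) + 1)) := by
      unfold Fpot
      rw [Gpot_le_of_ne hl]
      unfold mTerm
      rw [dif_pos hH]
      ring
    exact ⟨hmem _ hF, fun c hc => hF ▸ hlb c hc⟩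
  · intro hL1 hHe
    have hl : lockC n π ≠ 0 := by omega
    have hHne : ¬ (Hset n π).Nonempty := by
      rw [hHe]
      exact Finset.not_nonempty_empty
    have hF : Fpot n w π = Dw n w π + 2 * (Xset n π).inf' hX w +
        2 * ((Aset n π).inf' hA w * ((lockC n π : ℝ) - 1)) := by
      unfold Fpot
      rw [Gpot_le_of_ne hl]
      unfold mTerm
      rw [dif_neg hHne]
      ring
    exact ⟨hmem _ hF, fun c hc => hF ▸ hlb c hc⟩
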